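/- Let X be a standard Borel space, let p, q be probability measures on X, and let s be a coupling of p and q. Then composition with identity couplings is trivial: s ∘ I_p = s and I_q ∘ s = s, where I_p and I_q are the identity couplings of p and q. -/

import Mathlib

open MeasureTheory ProbabilityTheory

variable {X : Type*} [MeasurableSpace X] [StandardBorelSpace X] [Nonempty X]

/-- The composite `t ∘ s` of couplings: push `q ⊗ (s⃖ ×ₖ t⃗)` onto the outer two coordinates,
where `q = s.snd` is the middle measure. -/
noncomputable def coupComp (t s : Measure (X × X)) [IsFiniteMeasure s] [IsFiniteMeasure t] :
    Measure (X × X) :=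
  (s.snd.compProd ((s.map Prod.swap).condKernel ×ₖ t.condKernel)).map Prod.snd

/-- The identity coupling of `p`: the pushforward of `p` along the diagonal `x ↦ (x, x)`. -/
noncomputable def idCoup (p : Measure X) : Measure (X × X) :=
  p.map (fun x => (x, x))

instance idCoup.instIsProbabilityMeasure (p : Measure X) [IsProbabilityMeasure p] :
    IsProbabilityMeasure (idCoup p) :=
  MeasureTheory.Measure.isProbabilityMeasure_map (measurable_id.prodMk measurable_id).aemeasurable

private lemma ext_prod_rect {μ ν : Measure (X × X)} [IsFiniteMeasure μ] [IsFiniteMeasure ν]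
    (h : ∀ A B : Set X, MeasurableSet A → MeasurableSet B → μ (A ×ˢ B) = ν (A ×ˢ B)) :
    μ = ν := by
  refine ext_of_generate_finite _ generateFrom_prod.symm isPiSystem_prod ?_ ?_
  · rintro _ ⟨A, hA, B, hB, rfl⟩; exact h A B hA hB
  · simpa [← Set.univ_prod_univ] using h Set.univ Set.univ .univ .univ

private lemma diag_measurable : Measurable (fun x : X => (x, x)) :=
  measurable_id.prodMk measurable_id

private lemma idCoup_fst (p : Measure X) : (idCoup p).fst = p := by
  rw [idCoup, Measure.fst, Measure.map_map measurable_fst diag_measurable]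
  simp [Function.comp_def]

private lemma idCoup_snd (p : Measure X) : (idCoup p).snd = p := by
  rw [idCoup, Measure.snd, Measure.map_map measurable_snd diag_measurable]
  simp [Function.comp_def]

private lemma idCoup_swap (p : Measure X) : (idCoup p).map Prod.swap = idCoup p := by
  rw [idCoup, Measure.map_map measurable_swap diag_measurable]
  rfl

private lemma idCoup_eq_compProd (p : Measure X) [IsProbabilityMeasure p] :
    idCoup p = p.compProd (Kernel.deterministic id measurable_id) := by
  refine ext_prod_rect fun A B hA hB => ?_
  rw [idCoup, Measure.map_apply diag_measurable (hA.prod hB),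
    Measure.compProd_apply_prod hA hB]
  have hpre : (fun x : X => (x, x)) ⁻¹' (A ×ˢ B) = A ∩ B := by
    ext x; simp [Set.mem_prod]
  rw [hpre]
  simp_rw [Kernel.deterministic_apply' measurable_id _ hB, id]
  have h2 : ∫⁻ a in A, B.indicator (fun _ => (1 : ENNReal)) a ∂p = (p.restrict A) B :=
    lintegral_indicator_one hB
  rw [h2, Measure.restrict_apply hB, Set.inter_comm]

private lemma condKernel_eq_det (p : Measure X) [IsProbabilityMeasure p]
    (ρ : Measure (X × X)) [IsFiniteMeasure ρ] (hρ : ρ = idCoup p) :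
    ∀ᵐ x ∂p, ρ.condKernel x = Kernel.deterministic id measurable_id x := by
  have h := eq_condKernel_of_measure_eq_compProd (ρ := ρ)
    (Kernel.deterministic id measurable_id)
    (by rw [hρ, idCoup_fst]; exact idCoup_eq_compProd p)
  have hfst : ρ.fst = p := by rw [hρ, idCoup_fst]
  rw [hfst] at h
  filter_upwards [h] with x hx using hx.symm

private lemma map_snd_compProd_det_prod (ν : Measure X) [IsProbabilityMeasure ν]
    (η : Kernel X X) [IsMarkovKernel η] :
    ((ν.compProd (Kernel.deterministic id measurable_id ×ₖ η)).map Prod.snd : Measure (X × X))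
      = ν.compProd η := by
  refine ext_prod_rect fun A B hA hB => ?_
  rw [Measure.map_apply measurable_snd (hA.prod hB)]
  have : Prod.snd ⁻¹' (A ×ˢ B) = (Set.univ : Set X) ×ˢ (A ×ˢ B) := by
    ext x; simp
  rw [this, Measure.compProd_apply_prod .univ (hA.prod hB), Measure.compProd_apply_prod hA hB,
    Measure.restrict_univ]
  have : ∀ x, (Kernel.deterministic (id : X → X) measurable_id ×ₖ η) x (A ×ˢ B)
      = A.indicator (fun y => η y B) x := by
    intro x
    rw [Kernel.prod_apply, Measure.prod_prod, Kernel.deterministic_apply' measurable_id _ hA]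
    by_cases hx : x ∈ A <;> simp [hx]
  simp_rw [this]
  rw [lintegral_indicator hA]

private lemma map_snd_compProd_prod_det (ν : Measure X) [IsProbabilityMeasure ν]
    (κ : Kernel X X) [IsMarkovKernel κ] :
    ((ν.compProd (κ ×ₖ Kernel.deterministic id measurable_id)).map Prod.snd : Measure (X × X))
      = (ν.compProd κ).map Prod.swap := by
  refine ext_prod_rect fun A B hA hB => ?_
  rw [Measure.map_apply measurable_snd (hA.prod hB),
    Measure.map_apply measurable_swap (hA.prod hB)]
  have h1 : Prod.snd ⁻¹' (A ×ˢ B) = (Set.univ : Set X) ×ˢ (A ×ˢ B) := by ext x; simp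
  have h2 : Prod.swap ⁻¹' (A ×ˢ B) = B ×ˢ A := by ext x; simp [and_comm]
  rw [h1, h2, Measure.compProd_apply_prod .univ (hA.prod hB), Measure.compProd_apply_prod hB hA,
    Measure.restrict_univ]
  have : ∀ x, (κ ×ₖ Kernel.deterministic (id : X → X) measurable_id) x (A ×ˢ B)
      = B.indicator (fun y => κ y A) x := by
    intro x
    rw [Kernel.prod_apply, Measure.prod_prod, Kernel.deterministic_apply' measurable_id _ hB]
    by_cases hx : x ∈ B <;> simp [hx]
  simp_rw [this]
  rw [lintegral_indicator hB]

/-- Identity couplings are identities for composition: `s ∘ I_p = s` and `I_q ∘ s = s`. -/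
theorem coupComp_idCoup (p q : Measure X)
    [IsProbabilityMeasure p] [IsProbabilityMeasure q]
    (s : Measure (X × X)) [IsProbabilityMeasure s]
    (hs1 : s.fst = p) (hs2 : s.snd = q) :
    coupComp s (idCoup p) = s ∧ coupComp (idCoup q) s = s := by
  constructor
  · rw [coupComp, idCoup_snd]
    have hcongr : p.compProd (((idCoup p).map Prod.swap).condKernel ×ₖ s.condKernel)
        = p.compProd (Kernel.deterministic id measurable_id ×ₖ s.condKernel) := by
      refine Measure.compProd_congr ?_
      filter_upwards [condKernel_eq_det p ((idCoup p).map Prod.swap) (idCoup_swap p)] with x hx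
      rw [Kernel.prod_apply, Kernel.prod_apply, hx]
    rw [hcongr, map_snd_compProd_det_prod, ← hs1, Measure.disintegrate]
  · rw [coupComp, hs2]
    have hcongr : q.compProd ((s.map Prod.swap).condKernel ×ₖ (idCoup q).condKernel)
        = q.compProd ((s.map Prod.swap).condKernel ×ₖ Kernel.deterministic id measurable_id) := by
      refine Measure.compProd_congr ?_
      filter_upwards [condKernel_eq_det q (idCoup q) rfl] with x hx
      rw [Kernel.prod_apply, Kernel.prod_apply, hx]
    have hq : q = (s.map Prod.swap).fst := by
      rw [← hs2, Measure.fst, Measure.snd, Measure.map_map measurable_fst measurable_swap]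
      rfl
    rw [hcongr, map_snd_compProd_prod_det, hq, Measure.disintegrate,
      Measure.map_map measurable_swap measurable_swap]
    simp
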